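/- Let D_d(x,R₁) and D_d(y,R₂) be digital discs with x = (α,0), y = (γ,0), α < γ, and let R₁, R₂ be integers with R₁ ≥ 1, R₂ ≥ 0 and |R₁ − R₂| ≤ γ − α ≤ R₁ + R₂. If C_d(x,R₁) ∩ C_d(y,R₂) = ∅, then m(D_d(x,R₁), D_d(y,R₂)) = 2(R₁² + R₂² + R₁ + R₂ − 2r₀² − 4r₀ − 1), where r₀ = (R₁ + R₂ − 1 − (γ − α))/2 (an integer ≥ 0 under the stated hypotheses). -/

import Mathlib

/-- L1 (taxicab) distance on the digital plane ℤ². -/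
def dL1 (p q : ℤ × ℤ) : ℤ := |p.1 - q.1| + |p.2 - q.2|

/-- Digital circle with center `x` and radius `r`. -/
def digCircle (x : ℤ × ℤ) (r : ℤ) : Set (ℤ × ℤ) := {z | dL1 x z = r}

/-- Digital disc with center `x` and radius `R`. -/
def digDisc (x : ℤ × ℤ) (R : ℤ) : Set (ℤ × ℤ) := {z | dL1 x z ≤ R}

/-- Jaccard-like metric: cardinality of the symmetric difference. -/
noncomputable def jm (A B : Set (ℤ × ℤ)) : ℕ := (symmDiff A B).ncard

def rowEmb (b : ℤ) : ℤ ↪ ℤ × ℤ :=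
  ⟨fun a => (a, b), fun a a' h => by simpa using (Prod.mk.injEq _ _ _ _ ▸ h : _ ∧ _).1⟩

noncomputable def stripF (lo hi m : ℤ) : Finset (ℤ × ℤ) :=
  (Finset.Icc (-m) m).biUnion (fun b => (Finset.Icc (lo + |b|) (hi - |b|)).map (rowEmb b))

lemma mem_stripF {lo hi m : ℤ} {z : ℤ × ℤ} :
    z ∈ stripF lo hi m ↔ |z.2| ≤ m ∧ lo + |z.2| ≤ z.1 ∧ z.1 ≤ hi - |z.2| := by
  obtain ⟨a, b⟩ := z
  simp only [stripF, Finset.mem_biUnion, Finset.mem_map, Finset.mem_Icc, rowEmb,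
    Function.Embedding.coeFn_mk, Prod.mk.injEq, DFunLike.coe]
  constructor
  · rintro ⟨b', ⟨h1, h2⟩, a', ⟨h3, h4⟩, rfl, rfl⟩
    exact ⟨abs_le.mpr ⟨h1, h2⟩, h3, h4⟩
  · rintro ⟨h1, h2, h3⟩
    exact ⟨b, ⟨(abs_le.mp h1).1, (abs_le.mp h1).2⟩, a, ⟨h2, h3⟩, rfl, rfl⟩

lemma sum_abs_Icc (n : ℕ) : ∑ b ∈ Finset.Icc (-(n : ℤ)) (n : ℤ), |b| = n * (n + 1) := by
  induction n with
  | zero => simp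
  | succ n ih =>
    have h1 : Finset.Icc (-((n : ℤ) + 1)) ((n : ℤ) + 1) =
        insert (-((n : ℤ) + 1)) (insert ((n : ℤ) + 1) (Finset.Icc (-(n : ℤ)) (n : ℤ))) := by
      ext x; simp only [Finset.mem_Icc, Finset.mem_insert]; omega
    push_cast
    rw [h1, Finset.sum_insert (by simp only [Finset.mem_insert, Finset.mem_Icc]; omega),
      Finset.sum_insert (by simp only [Finset.mem_Icc]; omega), ih]
    have e1 : |(-((n : ℤ) + 1))| = (n : ℤ) + 1 := by rw [abs_neg, abs_of_nonneg]; positivity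
    have e2 : |((n : ℤ) + 1)| = (n : ℤ) + 1 := by rw [abs_of_nonneg]; positivity
    rw [e1, e2]; push_cast; ring

lemma stripF_card (lo hi m : ℤ) (hm : 0 ≤ m) (hw : 2 * m ≤ hi - lo + 1) :
    ((stripF lo hi m).card : ℤ) = (2 * m + 1) * (hi - lo + 1) - 2 * (m * (m + 1)) := by
  have hdisj : ∀ b ∈ Finset.Icc (-m) m, ∀ b' ∈ Finset.Icc (-m) m, b ≠ b' →
      Disjoint ((Finset.Icc (lo + |b|) (hi - |b|)).map (rowEmb b))
        ((Finset.Icc (lo + |b'|) (hi - |b'|)).map (rowEmb b')) := by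
    intro b _ b' _ hne
    rw [Finset.disjoint_left]
    rintro ⟨a, c⟩ hz hz'
    simp only [Finset.mem_map, rowEmb, Function.Embedding.coeFn_mk, Prod.mk.injEq, DFunLike.coe] at hz hz'
    obtain ⟨_, _, _, rfl⟩ := hz
    obtain ⟨_, _, _, h⟩ := hz'
    exact hne h.symm
  rw [stripF, Finset.card_biUnion hdisj]
  have hcard : ∀ b ∈ Finset.Icc (-m) m,
      (((Finset.Icc (lo + |b|) (hi - |b|)).map (rowEmb b)).card : ℤ) = hi - lo + 1 - 2 * |b| := by
    intro b hb
    rw [Finset.mem_Icc] at hb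
    have habs : |b| ≤ m := abs_le.mpr hb
    rw [Finset.card_map, Int.card_Icc]
    rw [Int.toNat_of_nonneg (by omega)]
    ring
  push_cast
  rw [Finset.sum_congr rfl hcard, Finset.sum_sub_distrib]
  simp only [Finset.sum_const, Int.card_Icc, smul_eq_mul, ← Finset.mul_sum]
  lift m to ℕ using hm
  rw [sum_abs_Icc]
  have : ((m : ℤ) + 1 - -(m : ℤ)).toNat = 2 * m + 1 := by omega
  rw [this]; push_cast; ring

lemma coe_stripF_disc (c R : ℤ) (hR : 0 ≤ R) :
    (↑(stripF (c - R) (c + R) R) : Set (ℤ × ℤ)) = digDisc (c, 0) R := by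
  ext ⟨a, b⟩
  simp only [Finset.mem_coe, mem_stripF, digDisc, dL1, Set.mem_setOf_eq]
  rcases abs_cases b with ⟨h1, h2⟩ | ⟨h1, h2⟩ <;> rw [h1] <;>
    rcases abs_cases (c - a) with ⟨h3, h4⟩ | ⟨h3, h4⟩ <;> rw [h3] <;>
      rcases abs_cases ((0 : ℤ) - b) with ⟨h5, h6⟩ | ⟨h5, h6⟩ <;> rw [h5] <;> omega

theorem jm_discs_nonmeeting_boundaries (α γ R₁ R₂ : ℤ) (hαγ : α < γ)
    (hR₁ : 1 ≤ R₁) (hR₂ : 0 ≤ R₂)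
    (hlo : |R₁ - R₂| ≤ γ - α) (hhi : γ - α ≤ R₁ + R₂)
    (hdisj : digCircle (α, 0) R₁ ∩ digCircle (γ, 0) R₂ = ∅) :
    (jm (digDisc (α, 0) R₁) (digDisc (γ, 0) R₂) : ℤ) =
      2 * (R₁ ^ 2 + R₂ ^ 2 + R₁ + R₂ -
        2 * ((R₁ + R₂ - 1 - (γ - α)) / 2) ^ 2 -
        4 * ((R₁ + R₂ - 1 - (γ - α)) / 2) - 1) := by
  have hl1 : R₁ - R₂ ≤ γ - α := le_trans (le_abs_self _) hlo
  have hl2 : R₂ - R₁ ≤ γ - α := by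
    have h := le_abs_self (R₂ - R₁); rw [abs_sub_comm] at h; omega
  -- parity from disjointness of the boundary circles
  obtain ⟨k, hk0, hk⟩ : ∃ k : ℤ, 0 ≤ k ∧ R₁ + R₂ - (γ - α) = 2 * k + 1 := by
    rcases Int.even_or_odd (R₁ + R₂ - (γ - α)) with h | h
    · exfalso
      obtain ⟨k, hke⟩ := h
      have hmem : (α + R₁ - k, k) ∈ digCircle (α, 0) R₁ ∩ digCircle (γ, 0) R₂ := by
        constructor <;> simp only [digCircle, dL1, Set.mem_setOf_eq]
        · rw [abs_of_nonpos (by omega), abs_of_nonpos (by omega)]; omega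
        · rw [abs_of_nonneg (by omega), abs_of_nonpos (by omega)]; omega
      rw [hdisj] at hmem
      exact hmem
    · obtain ⟨k, hke⟩ := h
      exact ⟨k, by omega, by omega⟩
  have hdiv : (R₁ + R₂ - 1 - (γ - α)) / 2 = k := by omega
  set FA := stripF (α - R₁) (α + R₁) R₁ with hFA
  set FB := stripF (γ - R₂) (γ + R₂) R₂ with hFB
  set FI := stripF (γ - R₂) (α + R₁) k with hFI
  have hA : (↑FA : Set (ℤ × ℤ)) = digDisc (α, 0) R₁ := coe_stripF_disc α R₁ (by omega)
  have hB : (↑FB : Set (ℤ × ℤ)) = digDisc (γ, 0) R₂ := coe_stripF_disc γ R₂ hR₂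
  have hI : (↑FI : Set (ℤ × ℤ)) = digDisc (α, 0) R₁ ∩ digDisc (γ, 0) R₂ := by
    ext ⟨a, b⟩
    simp only [Finset.mem_coe, hFI, mem_stripF, digDisc, dL1, Set.mem_setOf_eq,
      Set.mem_inter_iff]
    rcases abs_cases b with ⟨h1, h2⟩ | ⟨h1, h2⟩ <;> rw [h1] <;>
      rcases abs_cases (α - a) with ⟨h3, h4⟩ | ⟨h3, h4⟩ <;> rw [h3] <;>
        rcases abs_cases (γ - a) with ⟨h5, h6⟩ | ⟨h5, h6⟩ <;> rw [h5] <;>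
          rcases abs_cases ((0 : ℤ) - b) with ⟨h7, h8⟩ | ⟨h7, h8⟩ <;> rw [h7] <;> omega
  have hAB : FA ∩ FB = FI := by
    apply Finset.coe_injective
    rw [Finset.coe_inter, hA, hB, hI]
  have hjm : (jm (digDisc (α, 0) R₁) (digDisc (γ, 0) R₂) : ℤ) = ((symmDiff FA FB).card : ℤ) := by
    rw [jm, ← hA, ← hB, ← Finset.coe_symmDiff, Set.ncard_coe_finset]
  rw [hjm]
  have hsd : (symmDiff FA FB).card = (FA ∪ FB).card - (FA ∩ FB).card := by
    rw [symmDiff_eq_sup_sdiff_inf, Finset.sup_eq_union, Finset.inf_eq_inter,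
      Finset.card_sdiff_of_subset (Finset.inter_subset_union)]
  have hui := Finset.card_union_add_card_inter FA FB
  have hle : (FA ∩ FB).card ≤ (FA ∪ FB).card := Finset.card_le_card Finset.inter_subset_union
  have hcardA : ((FA.card : ℤ)) = 2 * R₁ ^ 2 + 2 * R₁ + 1 := by
    rw [hFA, stripF_card _ _ _ (by omega) (by omega)]; ring
  have hcardB : ((FB.card : ℤ)) = 2 * R₂ ^ 2 + 2 * R₂ + 1 := by
    rw [hFB, stripF_card _ _ _ hR₂ (by omega)]; ring
  have hcardI : ((FI.card : ℤ)) = 2 * (k + 1) ^ 2 := by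
    rw [hFI, stripF_card _ _ _ hk0 (by omega)]
    have h2 : α + R₁ - (γ - R₂) + 1 = 2 * k + 2 := by omega
    rw [h2]; ring
  rw [hAB] at hui hle hsd
  have hcast : ((symmDiff FA FB).card : ℤ) = (FA.card : ℤ) + FB.card - 2 * FI.card := by
    omega
  rw [hcast, hcardA, hcardB, hcardI, hdiv]
  ring
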